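/- For a positive trace class operator S on H and any bounded operator X, trace(X*XS) = sup{ |trace(X*AS)|² : A finite rank, trace(A*AS) ≤ 1 }. -/

import Mathlib

open scoped ComplexOrder InnerProductSpace
noncomputable section

variable (H : Type*) [NormedAddCommGroup H] [InnerProductSpace ℂ H] [CompleteSpace H]

/-- The index set of a fixed Hilbert (orthonormal) basis of `H`. -/
def stdIdx : Set H := (exists_hilbertBasis ℂ H).choose

/-- A fixed Hilbert (orthonormal) basis of `H`. -/
def stdBasis : HilbertBasis (stdIdx H) ℂ H := (exists_hilbertBasis ℂ H).choose_spec.choose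

/-- `S` is a Hilbert–Schmidt operator. -/
def IsHilbertSchmidt (S : H →L[ℂ] H) : Prop :=
  Summable fun i => ‖S (stdBasis H i)‖ ^ 2

/-- `S` is a trace class operator: the product of two Hilbert–Schmidt operators. -/
def IsTraceClass (S : H →L[ℂ] H) : Prop :=
  ∃ B C : H →L[ℂ] H, IsHilbertSchmidt H B ∧ IsHilbertSchmidt H C ∧ S = B * C

/-- The trace of an operator, computed in the fixed basis. -/
def trace (S : H →L[ℂ] H) : ℂ := ∑' i, ⟪(stdBasis H i : H), S (stdBasis H i)⟫_ℂ

/-- A functional on `B(H)` is positive if `f (X⋆ X) ≥ 0` for all `X`. -/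
def IsPosFun (f : (H →L[ℂ] H) → ℂ) : Prop := ∀ X : H →L[ℂ] H, 0 ≤ f (star X * X)

/-- `X` has finite rank. -/
def IsFiniteRank (X : H →L[ℂ] H) : Prop := FiniteDimensional ℂ (LinearMap.range (X : H →ₗ[ℂ] H))

/-- A functional on `B(H)` is normal if it is represented by a trace class operator via the trace. -/
def IsNormalFn (f : (H →L[ℂ] H) → ℂ) : Prop :=
  ∃ F : H →L[ℂ] H, IsTraceClass H F ∧ ∀ X : H →L[ℂ] H, f X = trace H (X * F)


set_option maxHeartbeats 1000000
set_option synthInstance.maxHeartbeats 400000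

variable {H}

lemma sq19_conj_mul (z : ℂ) : (starRingEnd ℂ) z * z = ((‖z‖ ^ 2 : ℝ) : ℂ) := by
  rw [mul_comm, Complex.mul_conj]
  norm_cast
  rw [Complex.normSq_eq_norm_sq]

lemma sq19_re_conj_mul (z : ℂ) : ((starRingEnd ℂ) z * z).re = ‖z‖ ^ 2 := by
  rw [sq19_conj_mul]; exact Complex.ofReal_re _

theorem parseval_hasSum (x : H) :
    HasSum (fun i => ‖⟪(stdBasis H i : H), x⟫_ℂ‖ ^ 2) (‖x‖ ^ 2) := by
  have h := ((stdBasis H).hasSum_inner_mul_inner x x).mapL Complex.reCLM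
  have h2 : ∀ i : stdIdx H,
      Complex.reCLM (⟪x, (stdBasis H i : H)⟫_ℂ * ⟪(stdBasis H i : H), x⟫_ℂ)
        = ‖⟪(stdBasis H i : H), x⟫_ℂ‖ ^ 2 := by
    intro i
    rw [← inner_conj_symm x (stdBasis H i : H)]
    exact sq19_re_conj_mul _
  have h3 : Complex.reCLM ⟪x, x⟫_ℂ = ‖x‖ ^ 2 := by
    simpa using inner_self_eq_norm_sq (𝕜 := ℂ) x
  rw [h3] at h
  exact h.congr_fun fun i => (h2 i).symm

theorem parseval_summable (x : H) :
    Summable (fun i => ‖⟪(stdBasis H i : H), x⟫_ℂ‖ ^ 2) := (parseval_hasSum x).summable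

theorem parseval_tsum (x : H) :
    ∑' i, ‖⟪(stdBasis H i : H), x⟫_ℂ‖ ^ 2 = ‖x‖ ^ 2 := (parseval_hasSum x).tsum_eq

/-- summability of the full matrix of a Hilbert–Schmidt operator, arranged with the
column index first -/
theorem double_summable (B : H →L[ℂ] H) (hB : IsHilbertSchmidt H B) :
    Summable (fun p : stdIdx H × stdIdx H =>
      ‖⟪(stdBasis H p.2 : H), B (stdBasis H p.1)⟫_ℂ‖ ^ 2) := by
  rw [summable_prod_of_nonneg (fun p => by positivity)]
  refine ⟨fun j => parseval_summable (B (stdBasis H j)), ?_⟩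
  refine hB.congr fun j => ?_
  exact (parseval_tsum (B (stdBasis H j))).symm

theorem double_summable' (B : H →L[ℂ] H) (hB : IsHilbertSchmidt H B) :
    Summable (fun p : stdIdx H × stdIdx H =>
      ‖⟪(stdBasis H p.1 : H), B (stdBasis H p.2)⟫_ℂ‖ ^ 2) :=
  (double_summable B hB).prod_symm

theorem hs_star (B : H →L[ℂ] H) (hB : IsHilbertSchmidt H B) :
    IsHilbertSchmidt H (star B) := by
  have hd := (double_summable' B hB).prod
  refine hd.congr fun i => ?_
  have : ∀ j : stdIdx H, ‖⟪(stdBasis H i : H), B (stdBasis H j)⟫_ℂ‖ ^ 2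
      = ‖⟪(stdBasis H j : H), (star B) (stdBasis H i)⟫_ℂ‖ ^ 2 := by
    intro j
    rw [ContinuousLinearMap.star_eq_adjoint, norm_inner_symm,
      ContinuousLinearMap.adjoint_inner_right]
  rw [tsum_congr this, parseval_tsum]

theorem hs_comp (X B : H →L[ℂ] H) (hB : IsHilbertSchmidt H B) :
    IsHilbertSchmidt H (X * B) := by
  refine Summable.of_nonneg_of_le (fun i => by positivity) (fun i => ?_) (hB.mul_left (‖X‖ ^ 2))
  rw [ContinuousLinearMap.mul_apply, ← mul_pow]
  exact pow_le_pow_left₀ (norm_nonneg _) (X.le_opNorm _) 2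

lemma sq19_mul_le_half (x y : ℝ) : x * y ≤ (x ^ 2 + y ^ 2) / 2 := by nlinarith [sq_nonneg (x - y)]

theorem summable_norm_mul (u v : stdIdx H → H) (hu : Summable fun i => ‖u i‖ ^ 2)
    (hv : Summable fun i => ‖v i‖ ^ 2) : Summable fun i => ‖u i‖ * ‖v i‖ := by
  refine Summable.of_nonneg_of_le (fun i => by positivity) (fun i => sq19_mul_le_half _ _)
    (((hu.add hv).div_const 2))

theorem summable_inner (u v : stdIdx H → H) (hu : Summable fun i => ‖u i‖ ^ 2)
    (hv : Summable fun i => ‖v i‖ ^ 2) : Summable fun i => ⟪u i, v i⟫_ℂ :=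
  Summable.of_norm_bounded (summable_norm_mul u v hu hv) fun i => norm_inner_le_norm _ _

theorem tsum_inner_sq_le (u v : stdIdx H → H) (hu : Summable fun i => ‖u i‖ ^ 2)
    (hv : Summable fun i => ‖v i‖ ^ 2) :
    ‖∑' i, ⟪u i, v i⟫_ℂ‖ ^ 2 ≤ (∑' i, ‖u i‖ ^ 2) * (∑' i, ‖v i‖ ^ 2) := by
  have hrw : ∀ (w : stdIdx H → H), (fun i => ‖w i‖ ^ (2:ℝ)) = fun i => ‖w i‖ ^ 2 := by
    intro w; funext i
    rw [show (2:ℝ) = ((2:ℕ):ℝ) by norm_num, Real.rpow_natCast]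
  have hcs := Real.inner_le_Lp_mul_Lq_tsum_of_nonneg (Real.holderConjugate_iff.mpr ⟨(by norm_num : (1:ℝ) < 2),
    (by norm_num : (2:ℝ)⁻¹ + (2:ℝ)⁻¹ = 1)⟩) (fun i => norm_nonneg (u i)) (fun i => norm_nonneg (v i))
    (by rw [hrw]; exact hu) (by rw [hrw]; exact hv)
  rw [hrw, hrw] at hcs
  have h1 : ‖∑' i, ⟪u i, v i⟫_ℂ‖ ≤ ∑' i, ‖u i‖ * ‖v i‖ := by
    refine le_trans (norm_tsum_le_tsum_norm ?_) ?_
    · exact Summable.of_nonneg_of_le (fun i => norm_nonneg _) (fun i => norm_inner_le_norm _ _)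
        (summable_norm_mul u v hu hv)
    · exact Summable.tsum_le_tsum (fun i => norm_inner_le_norm _ _)
        (Summable.of_nonneg_of_le (fun i => norm_nonneg _) (fun i => norm_inner_le_norm _ _)
          (summable_norm_mul u v hu hv)) (summable_norm_mul u v hu hv)
  have hA : (0:ℝ) ≤ ∑' i, ‖u i‖ ^ 2 := tsum_nonneg fun i => by positivity
  have hB : (0:ℝ) ≤ ∑' i, ‖v i‖ ^ 2 := tsum_nonneg fun i => by positivity
  calc ‖∑' i, ⟪u i, v i⟫_ℂ‖ ^ 2 ≤ (∑' i, ‖u i‖ * ‖v i‖) ^ 2 := by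
        refine pow_le_pow_left₀ (norm_nonneg _) h1 2
    _ ≤ ((∑' i, ‖u i‖ ^ 2) ^ ((1:ℝ)/2) * (∑' i, ‖v i‖ ^ 2) ^ ((1:ℝ)/2)) ^ 2 := by
        refine pow_le_pow_left₀ (tsum_nonneg fun i => by positivity) hcs 2
    _ = (∑' i, ‖u i‖ ^ 2) * (∑' i, ‖v i‖ ^ 2) := by
        rw [mul_pow, ← Real.sqrt_eq_rpow, ← Real.sqrt_eq_rpow, Real.sq_sqrt hA, Real.sq_sqrt hB]

theorem trace_smul (d : ℂ) (M : H →L[ℂ] H) : trace H (d • M) = d * trace H M := by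
  unfold trace
  rw [← tsum_mul_left]
  exact tsum_congr fun i => by
    rw [ContinuousLinearMap.smul_apply, inner_smul_right]

theorem trace_comm (B C : H →L[ℂ] H) (hB : IsHilbertSchmidt H B)
    (hC : IsHilbertSchmidt H C) : trace H (B * C) = trace H (C * B) := by
  set e : stdIdx H → H := fun i => (stdBasis H i : H) with he
  set a : stdIdx H → stdIdx H → ℂ :=
    fun i j => ⟪e i, B (e j)⟫_ℂ * ⟪e j, C (e i)⟫_ℂ with ha
  have h1 : ∀ i, HasSum (a i) ⟪e i, (B * C) (e i)⟫_ℂ := by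
    intro i
    have h := (stdBasis H).hasSum_inner_mul_inner
      (ContinuousLinearMap.adjoint B (e i)) (C (e i))
    rw [ContinuousLinearMap.adjoint_inner_left] at h
    refine h.congr_fun fun j => ?_
    rw [ha]
    rw [ContinuousLinearMap.adjoint_inner_left]
  have h2 : ∀ j, HasSum (fun i => a i j) ⟪e j, (C * B) (e j)⟫_ℂ := by
    intro j
    have h := (stdBasis H).hasSum_inner_mul_inner
      (ContinuousLinearMap.adjoint C (e j)) (B (e j))
    rw [ContinuousLinearMap.adjoint_inner_left] at h
    refine h.congr_fun fun i => ?_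
    rw [ha]
    rw [ContinuousLinearMap.adjoint_inner_left, mul_comm]
  have hsum : Summable (Function.uncurry a) := by
    refine Summable.of_norm_bounded
      (g := fun p : stdIdx H × stdIdx H => (‖⟪e p.1, B (e p.2)⟫_ℂ‖ ^ 2 + ‖⟪e p.2, C (e p.1)⟫_ℂ‖ ^ 2) / 2) ?_ ?_
    · exact ((double_summable' B hB).add (double_summable C hC)).div_const 2
    · rintro ⟨i, j⟩
      have hn : ‖Function.uncurry a (i, j)‖ = ‖⟪e i, B (e j)⟫_ℂ‖ * ‖⟪e j, C (e i)⟫_ℂ‖ := by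
        simp [Function.uncurry, ha, norm_mul]
      rw [hn]
      exact sq19_mul_le_half _ _
  have key := Summable.tsum_comm (f := a) hsum
  calc trace H (B * C) = ∑' i, ∑' j, a i j := tsum_congr fun i => (h1 i).tsum_eq.symm
    _ = ∑' j, ∑' i, a i j := key.symm
    _ = trace H (C * B) := tsum_congr fun j => (h2 j).tsum_eq

theorem trace_form (T : H →L[ℂ] H) (hT : IsSelfAdjoint T) (hThs : IsHilbertSchmidt H T)
    (M A : H →L[ℂ] H) :
    trace H (star M * A * (T * T))
      = ∑' i, ⟪M (T (stdBasis H i)), A (T (stdBasis H i))⟫_ℂ := by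
  have h1 : star M * A * (T * T) = (star M * A * T) * T := by
    rw [mul_assoc, mul_assoc, mul_assoc]
  rw [h1, trace_comm _ _ (hs_comp (star M * A) T hThs) hThs]
  refine tsum_congr fun i => ?_
  have hTadj : ContinuousLinearMap.adjoint T = T := by
    rw [← ContinuousLinearMap.star_eq_adjoint]; exact hT
  rw [ContinuousLinearMap.mul_apply]
  calc ⟪(stdBasis H i : H), T ((star M * A * T) (stdBasis H i))⟫_ℂ
      = ⟪T (stdBasis H i), (star M * A * T) (stdBasis H i)⟫_ℂ := by
        conv_lhs => rw [← hTadj, ContinuousLinearMap.adjoint_inner_right]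
        rw [hTadj]
    _ = ⟪M (T (stdBasis H i)), A (T (stdBasis H i))⟫_ℂ := by
        rw [ContinuousLinearMap.mul_apply, ContinuousLinearMap.mul_apply,
          ContinuousLinearMap.star_eq_adjoint, ContinuousLinearMap.adjoint_inner_right]

theorem trace_form_self (T : H →L[ℂ] H) (hT : IsSelfAdjoint T) (hThs : IsHilbertSchmidt H T)
    (A : H →L[ℂ] H) :
    trace H (star A * A * (T * T))
      = ((∑' i, ‖A (T (stdBasis H i))‖ ^ 2 : ℝ) : ℂ) := by
  rw [trace_form T hT hThs A A, Complex.ofReal_tsum]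
  refine tsum_congr fun i => ?_
  rw [inner_self_eq_norm_sq_to_K, Complex.ofReal_pow]
  rfl

theorem sqrt_selfAdjoint (S : H →L[ℂ] H) : IsSelfAdjoint (CFC.sqrt S) :=
  ((ContinuousLinearMap.nonneg_iff_isPositive _).mp (CFC.sqrt_nonneg S)).isSelfAdjoint

theorem hs_sqrt (S : H →L[ℂ] H) (hS : S.IsPositive) (hStc : IsTraceClass H S) :
    IsHilbertSchmidt H (CFC.sqrt S) := by
  obtain ⟨B, C, hB, hC, hSeq⟩ := hStc
  have hTT : CFC.sqrt S * CFC.sqrt S = S :=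
    CFC.sqrt_mul_sqrt_self S ((ContinuousLinearMap.nonneg_iff_isPositive S).mpr hS)
  have h1 : Summable fun i => ⟪(stdBasis H i : H), S (stdBasis H i)⟫_ℂ := by
    have hs := summable_inner (fun i => (star B) (stdBasis H i)) (fun i => C (stdBasis H i))
      (hs_star B hB) hC
    refine hs.congr fun i => ?_
    rw [ContinuousLinearMap.star_eq_adjoint, ContinuousLinearMap.adjoint_inner_left, hSeq]
    rfl
  have h2 := h1.mapL Complex.reCLM
  refine h2.congr fun i => ?_
  have hTadj : ContinuousLinearMap.adjoint (CFC.sqrt S) = CFC.sqrt S := by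
    rw [← ContinuousLinearMap.star_eq_adjoint]; exact sqrt_selfAdjoint S
  have : ⟪(stdBasis H i : H), S (stdBasis H i)⟫_ℂ
      = ⟪CFC.sqrt S (stdBasis H i), CFC.sqrt S (stdBasis H i)⟫_ℂ := by
    conv_lhs => rw [← hTT, ContinuousLinearMap.mul_apply, ← hTadj,
      ContinuousLinearMap.adjoint_inner_right]
    rw [hTadj]
  rw [this]
  simpa using inner_self_eq_norm_sq (𝕜 := ℂ) (CFC.sqrt S (stdBasis H i))

theorem trace_zero' : trace H (0 : H →L[ℂ] H) = 0 := by
  unfold trace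
  simp

theorem finiteRank_of_range_le (A : H →L[ℂ] H) (s : Set H) (hs : s.Finite)
    (h : ∀ y, A y ∈ Submodule.span ℂ s) : IsFiniteRank H A := by
  haveI := FiniteDimensional.span_of_finite ℂ hs
  exact Submodule.finiteDimensional_of_le (S₂ := Submodule.span ℂ s)
    (by rintro x ⟨y, rfl⟩; exact h y)

variable (H)


/-- for positive trace class `S` and any bounded `X`,
`trace(X⋆ X S) = sup { |trace(X⋆ A S)|² : A finite rank, trace(A⋆ A S) ≤ 1 }`. -/
theorem stmt19 (S : H →L[ℂ] H) (hS : S.IsPositive) (hStc : IsTraceClass H S)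
    (X : H →L[ℂ] H) :
    trace H (star X * X * S) = ↑(sSup {r : ℝ | ∃ A : H →L[ℂ] H, IsFiniteRank H A ∧
      trace H (star A * A * S) ≤ 1 ∧
      r = ‖trace H (star X * A * S)‖ ^ 2}) := by
  classical
  set e : stdIdx H → H := fun i => (stdBasis H i : H) with he
  set T : H →L[ℂ] H := CFC.sqrt S with hTdef
  have hTT : T * T = S :=
    CFC.sqrt_mul_sqrt_self S ((ContinuousLinearMap.nonneg_iff_isPositive S).mpr hS)
  have hTsa : IsSelfAdjoint T := sqrt_selfAdjoint S
  have hThs : IsHilbertSchmidt H T := hs_sqrt S hS hStc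
  set u : stdIdx H → H := fun i => X (T (e i)) with hu
  have hu2 : Summable fun i => ‖u i‖ ^ 2 := hs_comp X T hThs
  set t : ℝ := ∑' i, ‖u i‖ ^ 2 with ht
  have ht0 : 0 ≤ t := tsum_nonneg fun i => by positivity
  have traceXA : ∀ A : H →L[ℂ] H,
      trace H (star X * A * S) = ∑' i, ⟪u i, A (T (e i))⟫_ℂ := by
    intro A; rw [← hTT]; exact trace_form T hTsa hThs X A
  have traceAA : ∀ A : H →L[ℂ] H,
      trace H (star A * A * S) = ((∑' i, ‖A (T (e i))‖ ^ 2 : ℝ) : ℂ) := by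
    intro A; rw [← hTT]; exact trace_form_self T hTsa hThs A
  have hLHS : trace H (star X * X * S) = (t : ℂ) := traceAA X
  set E : Set ℝ := {r : ℝ | ∃ A : H →L[ℂ] H, IsFiniteRank H A ∧
      trace H (star A * A * S) ≤ 1 ∧
      r = ‖trace H (star X * A * S)‖ ^ 2} with hE
  have hub : ∀ r ∈ E, r ≤ t := by
    rintro r ⟨A, -, hA1, rfl⟩
    have hv2 : Summable fun i => ‖A (T (e i))‖ ^ 2 := hs_comp A T hThs
    have hv1 : ∑' i, ‖A (T (e i))‖ ^ 2 ≤ 1 := by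
      rw [traceAA A, show (1:ℂ) = ((1:ℝ):ℂ) by norm_num, Complex.real_le_real] at hA1
      exact hA1
    calc ‖trace H (star X * A * S)‖ ^ 2
        = ‖∑' i, ⟪u i, A (T (e i))⟫_ℂ‖ ^ 2 := by rw [traceXA A]
      _ ≤ t * ∑' i, ‖A (T (e i))‖ ^ 2 := tsum_inner_sq_le u _ hu2 hv2
      _ ≤ t * 1 := mul_le_mul_of_nonneg_left hv1 ht0
      _ = t := mul_one t
  have hbdd : BddAbove E := ⟨t, hub⟩
  have h0 : (0:ℝ) ∈ E := by
    refine ⟨0, ?_, ?_, ?_⟩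
    · exact finiteRank_of_range_le 0 ∅ Set.finite_empty fun y => by simp
    · rw [show star (0 : H →L[ℂ] H) * 0 * S = 0 by simp, trace_zero']
      rw [Complex.le_def]
      norm_num
    · rw [show star X * 0 * S = 0 by simp, trace_zero']
      simp
  have hge : t ≤ sSup E := by
    refine le_of_forall_pos_le_add fun ε hε => ?_
    set a2 : stdIdx H → stdIdx H → ℝ := fun i j => ‖⟪e j, u i⟫_ℂ‖ ^ 2 with ha2
    have hf : Summable (Function.uncurry a2) := by
      rw [summable_prod_of_nonneg (fun p => by
        show (0:ℝ) ≤ a2 p.1 p.2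
        rw [ha2]; positivity)]
      exact ⟨fun i => parseval_summable (u i),
        hu2.congr fun i => (parseval_tsum (u i)).symm⟩
    have hswap : Summable fun p : stdIdx H × stdIdx H => a2 p.2 p.1 := hf.prod_symm
    have hcol : ∀ j, Summable fun i => a2 i j := fun j => hswap.prod_factor j
    have hc : Summable fun j => ∑' i, a2 i j := hswap.prod
    have htc : ∑' j, ∑' i, a2 i j = t := by
      rw [Summable.tsum_comm hf]
      exact tsum_congr fun i => parseval_tsum (u i)
    have hast : HasSum (fun j => ∑' i, a2 i j) t := htc ▸ hc.hasSum
    obtain ⟨F, hF⟩ := (hast.eventually (eventually_gt_nhds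
      (show t - ε < t by linarith))).exists
    set σ : ℝ := ∑ j ∈ F, ∑' i, a2 i j with hσdef
    set sF : stdIdx H → ℝ := fun i => ∑ j ∈ F, a2 i j with hsF
    have hσ : σ = ∑' i, sF i := (Summable.tsum_finsetSum fun j _ => hcol j).symm
    set P : H →L[ℂ] H := ∑ j ∈ F, (innerSL ℂ (e j)).smulRight (e j) with hP
    have hPapply : ∀ y, P y = ∑ j ∈ F, ⟪e j, y⟫_ℂ • e j := by
      intro y
      rw [hP, ContinuousLinearMap.sum_apply]
      exact Finset.sum_congr rfl fun j _ => by
        rw [ContinuousLinearMap.smulRight_apply, innerSL_apply_apply]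
    set A0 : H →L[ℂ] H := P * X with hA0
    have hA0T : ∀ i, A0 (T (e i)) = ∑ j ∈ F, ⟪e j, u i⟫_ℂ • e j := fun i => hPapply (u i)
    have h_inner_vv : ∀ i, ⟪A0 (T (e i)), A0 (T (e i))⟫_ℂ = ((sF i : ℝ) : ℂ) := by
      intro i
      rw [hA0T i, (stdBasis H).orthonormal.inner_sum (fun j => ⟪e j, u i⟫_ℂ)
        (fun j => ⟪e j, u i⟫_ℂ) F, Complex.ofReal_sum]
      exact Finset.sum_congr rfl fun j _ => sq19_conj_mul _
    have h_norm_vv : ∀ i, ‖A0 (T (e i))‖ ^ 2 = sF i := by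
      intro i
      rw [← inner_self_eq_norm_sq (𝕜 := ℂ), h_inner_vv i]
      simp
    have h_inner_uv : ∀ i, ⟪u i, A0 (T (e i))⟫_ℂ = ((sF i : ℝ) : ℂ) := by
      intro i
      rw [hA0T i, inner_sum, Complex.ofReal_sum]
      refine Finset.sum_congr rfl fun j _ => ?_
      rw [inner_smul_right, ← inner_conj_symm (u i) (e j), mul_comm]
      exact sq19_conj_mul _
    have traceA0 : trace H (star A0 * A0 * S) = ((σ : ℝ) : ℂ) := by
      rw [traceAA A0, hσ]
      exact Complex.ofReal_inj.mpr (tsum_congr h_norm_vv)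
    have traceX0 : trace H (star X * A0 * S) = ((σ : ℝ) : ℂ) := by
      rw [traceXA A0, tsum_congr h_inner_uv, ← Complex.ofReal_tsum, hσ]
    rcases le_or_gt σ 0 with hσ0 | hσ0
    · have h0le : (0:ℝ) ≤ sSup E := le_csSup hbdd h0
      linarith
    · set cr : ℝ := (Real.sqrt σ)⁻¹ with hcr
      set A' : H →L[ℂ] H := ((cr : ℝ) : ℂ) • A0 with hA'
      have hσE : σ ∈ E := by
        refine ⟨A', ?_, ?_, ?_⟩
        · refine finiteRank_of_range_le A'
            ((fun j => e j) '' (↑F : Set (stdIdx H))) (F.finite_toSet.image _) fun y => ?_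
          rw [hA', ContinuousLinearMap.smul_apply, hA0, ContinuousLinearMap.mul_apply,
            hPapply (X y)]
          refine Submodule.smul_mem _ _ (Submodule.sum_mem _ fun j hj =>
            Submodule.smul_mem _ _ (Submodule.subset_span ?_))
          exact ⟨j, Finset.mem_coe.mpr hj, rfl⟩
        · have hstar : star A' = ((cr : ℝ) : ℂ) • star A0 := by
            rw [hA', star_smul, Complex.star_def, Complex.conj_ofReal]
          have : star A' * A' * S = (((cr * cr : ℝ)) : ℂ) • (star A0 * A0 * S) := by
            rw [hstar, hA']
            simp only [smul_mul_assoc, mul_smul_comm, smul_smul, ← Complex.ofReal_mul]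
          rw [this, trace_smul, traceA0, ← Complex.ofReal_mul]
          have : cr * cr * σ = 1 := by
            rw [hcr, ← mul_inv, Real.mul_self_sqrt hσ0.le]
            exact inv_mul_cancel₀ hσ0.ne'
          rw [this, Complex.ofReal_one]
        · have : star X * A' * S = ((cr : ℝ) : ℂ) • (star X * A0 * S) := by
            rw [hA', mul_smul_comm, smul_mul_assoc]
          rw [this, trace_smul, traceX0, ← Complex.ofReal_mul, Complex.norm_real, Real.norm_eq_abs]
          have h1 : cr * σ = Real.sqrt σ := by
            rw [hcr, inv_mul_eq_div, Real.div_sqrt]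
          rw [h1, abs_of_nonneg (Real.sqrt_nonneg σ), Real.sq_sqrt hσ0.le]
      have : σ ≤ sSup E := le_csSup hbdd hσE
      linarith
  have hle : sSup E ≤ t := csSup_le ⟨0, h0⟩ hub
  rw [hLHS, le_antisymm hle hge]
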